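/- arXiv:2108.08107 — 4 statements merged into one kernel-verified Lean document; each statement's English description precedes it below -/
import Mathlib

section
/- Let V be a finite-dimensional vector space over a field K, M a linear endomorphism of V, and (P, ≤) a finite partially ordered set. Suppose (v_p)_{p ∈ P} is a spanning family of V such that M v_p = ∑_{q ≥ p} c_{pq} v_q for coefficients c_{pq} ∈ K, and c_{pp} = 1 if and only if p is maximal in P. Then the fixed subspace {v ∈ V : Mv = v} is spanned by the v_p with p maximal. -/
open scoped Classical

/-- Nebe–Rains–Sloane, Lemma 5.5.10: if an endomorphism `M` acts
triangularly on a spanning family indexed by a finite poset, with diagonal coefficient `1`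
exactly at the maximal indices, then the fixed space of `M` is spanned by the vectors at
maximal indices. -/
theorem stmt11 {K V : Type*} [Field K] [AddCommGroup V] [Module K V] [FiniteDimensional K V]
    {P : Type*} [Fintype P] [PartialOrder P]
    (v : P → V) (hspan : Submodule.span K (Set.range v) = ⊤)
    (M : V →ₗ[K] V) (c : P → P → K)
    (hM : ∀ p, M (v p) = ∑ q ∈ Finset.univ.filter (fun q => p ≤ q), c p q • v q)
    (hc : ∀ p, c p p = 1 ↔ IsMax p) :
    {w : V | M w = w} = ↑(Submodule.span K (v '' {p | IsMax p})) := by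
  classical
  set S := Submodule.span K (v '' {p | IsMax p}) with hS
  have hfix : ∀ p, IsMax p → M (v p) = v p := by
    intro p hp
    have hfilter : Finset.univ.filter (fun q => p ≤ q) = {p} := by
      ext q
      simp only [Finset.mem_filter, Finset.mem_univ, true_and, Finset.mem_singleton]
      constructor
      · intro h; exact le_antisymm (hp h) h
      · rintro rfl; exact le_refl _
    rw [hM, hfilter, Finset.sum_singleton, (hc p).2 hp, one_smul]
  have hfixS : ∀ s ∈ S, M s = s := by
    intro s hs
    induction hs using Submodule.span_induction with
    | mem x hx => obtain ⟨p, hp, rfl⟩ := hx; exact hfix p hp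
    | zero => simp
    | add x y _ _ hx hy => simp [map_add, hx, hy]
    | smul a x _ hx => simp [map_smul, hx]
  have hmaps : ∀ s ∈ S, ((M - LinearMap.id : V →ₗ[K] V)) s ∈ S := by
    intro s hs
    simp [LinearMap.sub_apply, hfixS s hs]
  let g : (V ⧸ S) →ₗ[K] V ⧸ S := Submodule.mapQ S S (M - LinearMap.id : V →ₗ[K] V) hmaps
  have hg : ∀ w : V, g (Submodule.mkQ S w) = Submodule.mkQ S (M w - w) := by
    intro w
    simp [g, Submodule.mapQ_apply, LinearMap.sub_apply]
  have hrange : ∀ p, Submodule.mkQ S (v p) ∈ LinearMap.range g := by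
    intro p
    induction p using ((Finite.to_wellFoundedGT (α := P)).wf).induction with
    | _ p ih =>
      by_cases hp : IsMax p
      · have h0 : Submodule.mkQ S (v p) = 0 := by
          rw [Submodule.mkQ_apply, Submodule.Quotient.mk_eq_zero]
          exact Submodule.subset_span ⟨p, hp, rfl⟩
        rw [h0]; exact zero_mem _
      · have hne : c p p - 1 ≠ 0 := by
          intro h
          exact hp ((hc p).1 (sub_eq_zero.mp h))
        have hpmem : p ∉ Finset.univ.filter (fun q => p < q) := by simp
        have hfilter : Finset.univ.filter (fun q => p ≤ q)
            = insert p (Finset.univ.filter (fun q => p < q)) := by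
          ext q
          simp only [Finset.mem_filter, Finset.mem_univ, true_and, Finset.mem_insert]
          constructor
          · intro h
            rcases eq_or_lt_of_le h with h' | h'
            · exact Or.inl h'.symm
            · exact Or.inr h'
          · rintro (rfl | h)
            · exact le_refl _
            · exact le_of_lt h
        have key : (c p p - 1) • Submodule.mkQ S (v p)
            = g (Submodule.mkQ S (v p))
              - ∑ q ∈ Finset.univ.filter (fun q => p < q), c p q • Submodule.mkQ S (v q) := by
          rw [hg, hM p, hfilter, Finset.sum_insert hpmem]
          rw [sub_smul, one_smul, map_sub, map_add, map_sum]
          simp only [map_smul]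
          abel
        have hmem : (c p p - 1) • Submodule.mkQ S (v p) ∈ LinearMap.range g := by
          rw [key]
          refine sub_mem (LinearMap.mem_range_self g _) (Submodule.sum_mem _ ?_)
          intro q hq
          simp only [Finset.mem_filter, Finset.mem_univ, true_and] at hq
          exact Submodule.smul_mem _ _ (ih q hq)
        have := Submodule.smul_mem (LinearMap.range g) (c p p - 1)⁻¹ hmem
        rwa [smul_smul, inv_mul_cancel₀ hne, one_smul] at this
  have hsurj : Function.Surjective g := by
    rw [← LinearMap.range_eq_top]
    rw [← top_le_iff]
    have htop : Submodule.span K (Set.range (fun p => Submodule.mkQ S (v p))) = ⊤ := by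
      have : Set.range (fun p => Submodule.mkQ S (v p)) = Submodule.mkQ S '' Set.range v := by
        ext x; simp [Set.range_comp]
      rw [this, ← Submodule.map_span, hspan, Submodule.map_top, Submodule.range_mkQ]
    rw [← htop, Submodule.span_le]
    rintro x ⟨p, rfl⟩
    exact hrange p
  have hinj : Function.Injective g :=
    (LinearMap.injective_iff_surjective).mpr hsurj
  ext w
  simp only [Set.mem_setOf_eq, SetLike.mem_coe]
  constructor
  · intro hw
    have : g (Submodule.mkQ S w) = 0 := by
      rw [hg, hw, sub_self, map_zero]
    have h0 : Submodule.mkQ S w = 0 := by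
      apply hinj
      rw [this, map_zero]
    rwa [Submodule.mkQ_apply, Submodule.Quotient.mk_eq_zero] at h0
  · intro hw
    exact hfixS w hw
end

section
/- Let p be a prime. Then ∏_{a=1}^{p−1} η(τ + a/p) = e^{2πi(p−1)/48} · η(pτ)^{p+1} / (η(τ) · η(p²τ)) for all τ in the upper half-plane. -/
/-- The Dedekind eta function `η(τ) = e^{πiτ/12} ∏_{n≥1} (1 - e^{2πinτ})`, as a function on
`ℂ` (intended for `τ` in the upper half-plane). -/
noncomputable def eta (τ : ℂ) : ℂ :=
  Complex.exp ((Real.pi : ℂ) * Complex.I * τ / 12) *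
    ∏' n : ℕ, (1 - Complex.exp (2 * (Real.pi : ℂ) * Complex.I * ((n : ℂ) + 1) * τ))

section Aux
open Complex Finset

noncomputable def Fq (x : ℂ) : ℂ := ∏' n : ℕ, (1 - x ^ (n + 1))

lemma summable_geom_shift {r : ℝ} (h0 : 0 ≤ r) (hr : r < 1) :
    Summable fun n : ℕ => r ^ (n + 1) := by
  simpa [pow_succ, mul_comm] using (summable_geometric_of_lt_one h0 hr).mul_left r

lemma factor_ne_zero {x : ℂ} (hx : ‖x‖ < 1) (n : ℕ) : (1 : ℂ) - x ^ (n + 1) ≠ 0 := by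
  have : ‖x ^ (n + 1)‖ < 1 := by
    rw [norm_pow]
    exact pow_lt_one₀ (norm_nonneg x) hx (Nat.succ_ne_zero n)
  intro h
  rw [sub_eq_zero] at h
  rw [← h] at this
  simp at this

lemma log_summable {f : ℕ → ℂ} (h : Summable fun n => ‖f n - 1‖) :
    Summable fun n => Complex.log (f n) := by
  apply Summable.of_norm_bounded_eventually_nat (g := fun n => (3/2) * ‖f n - 1‖) (h.mul_left _)
  have := h.tendsto_atTop_zero
  filter_upwards [this.eventually_le_const (show (0:ℝ) < 1/2 by norm_num)] with n hn
  have := Complex.norm_log_one_add_half_le_self (z := f n - 1) (by simpa using hn)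
  simpa using this

lemma multipliable_aux {f : ℕ → ℂ} (h0 : ∀ n, f n ≠ 0) (h : Summable fun n => ‖f n - 1‖) :
    Multipliable f :=
  Complex.multipliable_of_summable_log (log_summable h)

lemma tprod_ne_zero_aux {f : ℕ → ℂ} (h0 : ∀ n, f n ≠ 0) (h : Summable fun n => ‖f n - 1‖) :
    ∏' n, f n ≠ 0 := by
  have := Complex.cexp_tsum_eq_tprod h0 (log_summable h)
  rw [← this]
  exact Complex.exp_ne_zero _

lemma summable_F {x : ℂ} (hx : ‖x‖ < 1) :
    Summable fun n : ℕ => ‖(1 - x ^ (n + 1)) - 1‖ := by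
  have := summable_geom_shift (norm_nonneg x) hx
  apply this.congr
  intro n
  simp [norm_pow]

lemma multipliable_F {x : ℂ} (hx : ‖x‖ < 1) : Multipliable fun n : ℕ => 1 - x ^ (n + 1) :=
  multipliable_aux (factor_ne_zero hx) (summable_F hx)

lemma F_ne_zero {x : ℂ} (hx : ‖x‖ < 1) : Fq x ≠ 0 :=
  tprod_ne_zero_aux (factor_ne_zero hx) (summable_F hx)

lemma prim_prod {p : ℕ} (hp : 0 < p) {μ : ℂ} (hμ : IsPrimitiveRoot μ p) (x : ℂ) :
    ∏ a ∈ range p, (1 - x * μ ^ a) = 1 - x ^ p := by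
  have h1 : (1 : ℂ) ^ p - x ^ p = ∏ ζ ∈ Polynomial.nthRootsFinset p (1 : ℂ), (1 - ζ * x) :=
    hμ.pow_sub_pow_eq_prod_sub_mul 1 x hp
  have : NeZero p := ⟨hp.ne'⟩
  rw [one_pow] at h1
  rw [h1]
  refine Finset.prod_nbij (fun a => μ ^ a) (fun a ha => ?_) (fun a ha b hb hab => ?_)
    (fun ξ hξ => ?_) (fun a ha => by ring)
  · exact (Polynomial.mem_nthRootsFinset hp 1).2 (by rw [← pow_mul, mul_comm, pow_mul, hμ.pow_eq_one, one_pow])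
  · simp only [Finset.coe_range, Set.mem_Iio] at ha hb
    exact hμ.pow_inj ha hb hab
  · simp only [Finset.coe_range, Set.mem_Iio, Set.mem_image]
    obtain ⟨i, hik, rfl⟩ := hμ.eq_pow_of_pow_eq_one ((Polynomial.mem_nthRootsFinset hp 1).1 hξ)
    exact ⟨i, hik, rfl⟩

lemma pointwise {p : ℕ} (hp : p.Prime) (q : ℂ) {ζ : ℂ} (hζ : IsPrimitiveRoot ζ p) (n : ℕ) :
    ∏ a ∈ range p, (1 - (q * ζ ^ a) ^ (n + 1)) =
      if p ∣ (n + 1) then (1 - q ^ (n + 1)) ^ p else 1 - (q ^ p) ^ (n + 1) := by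
  have hfac : ∀ a : ℕ, (q * ζ ^ a) ^ (n + 1) = q ^ (n + 1) * (ζ ^ (n + 1)) ^ a := by
    intro a
    rw [mul_pow, ← pow_mul, ← pow_mul, mul_comm a (n + 1)]
  by_cases h : p ∣ (n + 1)
  · obtain ⟨k, hk⟩ := h
    have h1 : ζ ^ (n + 1) = 1 := by rw [hk, pow_mul, hζ.pow_eq_one, one_pow]
    rw [if_pos ⟨k, hk⟩]
    rw [Finset.prod_congr rfl (fun a _ => by rw [hfac, h1, one_pow, mul_one]),
      Finset.prod_const, card_range]
  · rw [if_neg h]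
    have hcop : (n + 1).Coprime p := Nat.coprime_comm.mp (hp.coprime_iff_not_dvd.mpr h)
    have hμ : IsPrimitiveRoot (ζ ^ (n + 1)) p := hζ.pow_of_coprime _ hcop
    have hpp := prim_prod hp.pos hμ (q ^ (n + 1))
    rw [Finset.prod_congr rfl (fun a _ => by rw [hfac]), hpp, ← pow_mul, mul_comm (n+1) p,
      pow_mul]

lemma summable_D {x : ℂ} (hx : ‖x‖ < 1) {p : ℕ} (hp : 0 < p) :
    Summable fun m : ℕ =>
      ‖(1 - x ^ (m + 1)) ^ p * (1 - (x ^ p) ^ (m + 1))⁻¹ - 1‖ := by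
  have hgeo := summable_geom_shift (norm_nonneg x) hx
  apply Summable.of_norm_bounded_eventually_nat
    (g := fun m => (2 * (p * (3/2) ^ p) + 2) * ‖x‖ ^ (m + 1)) (hgeo.mul_left _)
  filter_upwards [hgeo.tendsto_atTop_zero.eventually_le_const
    (show (0:ℝ) < 1/2 by norm_num)] with m hm
  set a : ℂ := x ^ (m + 1) with ha
  set b : ℂ := (x ^ p) ^ (m + 1) with hb
  have hna : ‖a‖ ≤ 1/2 := by simpa [ha, norm_pow] using hm
  have hna' : ‖a‖ = ‖x‖ ^ (m + 1) := by rw [ha, norm_pow]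
  have hnb : ‖b‖ ≤ ‖a‖ := by
    rw [hb, ha, norm_pow, norm_pow, norm_pow, ← pow_mul, mul_comm p (m+1), pow_mul]
    exact pow_le_of_le_one (by positivity) (by rw [← norm_pow, ← ha]; exact hna.trans (by norm_num)) hp.ne'
  have hb2 : ‖b‖ ≤ 1/2 := hnb.trans hna
  have h1b : (1 : ℝ)/2 ≤ ‖1 - b‖ := by
    have := norm_sub_norm_le (1 : ℂ) b
    simp only [norm_one] at this
    linarith
  have h1bne : (1 : ℂ) - b ≠ 0 := by
    intro h; rw [h] at h1b; simp at h1b; linarith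
  have hinv : ‖((1:ℂ) - b)⁻¹‖ ≤ 2 := by
    rw [norm_inv]
    rw [inv_le_comm₀ (by linarith) (by norm_num)]
    linarith
  have hgs : ‖(1 - a) ^ p - 1‖ ≤ p * (3/2) ^ p * ‖a‖ := by
    have hid : (1 - a) ^ p - 1 = (∑ i ∈ range p, (1 - a) ^ i) * (-a) := by
      have := geom_sum_mul (1 - a) p
      rw [← this]; ring
    rw [hid]
    have hs : ‖∑ i ∈ range p, (1 - a) ^ i‖ ≤ p * (3/2) ^ p := by
      refine (norm_sum_le _ _).trans ?_
      have : ∀ i ∈ range p, ‖(1 - a) ^ i‖ ≤ (3/2) ^ p := by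
        intro i hi
        rw [norm_pow]
        have h32 : ‖1 - a‖ ≤ 3/2 := by
          refine (norm_sub_le _ _).trans ?_
          simp only [norm_one]; linarith
        calc ‖1 - a‖ ^ i ≤ (3/2 : ℝ) ^ i :=
              pow_le_pow_left₀ (norm_nonneg _) h32 i
          _ ≤ (3/2) ^ p := pow_le_pow_right₀ (by norm_num) (le_of_lt (mem_range.1 hi))
      calc ∑ i ∈ range p, ‖(1 - a) ^ i‖ ≤ ∑ _i ∈ range p, (3/2 : ℝ) ^ p :=
            Finset.sum_le_sum this
        _ = p * (3/2) ^ p := by rw [Finset.sum_const, card_range, nsmul_eq_mul]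
    rw [norm_mul, norm_neg]
    exact mul_le_mul hs le_rfl (norm_nonneg _) (by positivity)
  have hD : (1 - a) ^ p * (1 - b)⁻¹ - 1 = ((1 - a) ^ p - (1 - b)) * (1 - b)⁻¹ := by
    field_simp
  rw [hD]
  have hnum : ‖(1 - a) ^ p - (1 - b)‖ ≤ p * (3/2) ^ p * ‖a‖ + ‖b‖ := by
    have : (1 - a) ^ p - (1 - b) = ((1 - a) ^ p - 1) + b := by ring
    rw [this]
    exact (norm_add_le _ _).trans (add_le_add hgs le_rfl)
  have : ‖((1 - a) ^ p - (1 - b)) * (1 - b)⁻¹‖ ≤ (p * (3/2) ^ p * ‖a‖ + ‖b‖) * 2 := by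
    rw [norm_mul]
    exact mul_le_mul hnum hinv (norm_nonneg _) (by positivity)
  rw [norm_norm]
  refine this.trans ?_
  have := hnb
  rw [hna'] at *
  nlinarith [norm_nonneg b, pow_nonneg (norm_nonneg x) (m+1), pow_nonneg (show (0:ℝ) ≤ 3/2 by norm_num) p, Nat.cast_nonneg (α := ℝ) p]

lemma norm_eq_one_of_prim {p : ℕ} (hp : 0 < p) {ζ : ℂ} (hζ : IsPrimitiveRoot ζ p) : ‖ζ‖ = 1 := by
  have h1 : ‖ζ‖ ^ p = 1 := by rw [← norm_pow, hζ.pow_eq_one, norm_one]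
  rcases lt_trichotomy ‖ζ‖ 1 with h | h | h
  · exact absurd h1 (ne_of_lt (pow_lt_one₀ (norm_nonneg _) h hp.ne'))
  · exact h
  · exact absurd h1.symm (ne_of_lt (one_lt_pow₀ h hp.ne'))

lemma key {p : ℕ} (hp : p.Prime) {q : ℂ} (hq : ‖q‖ < 1) {ζ : ℂ} (hζ : IsPrimitiveRoot ζ p) :
    (∏ a ∈ range p, Fq (q * ζ ^ a)) * Fq (q ^ p ^ 2) = Fq (q ^ p) ^ (p + 1) := by
  have hζ1 : ‖ζ‖ = 1 := norm_eq_one_of_prim hp.pos hζ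
  have hqz : ∀ a : ℕ, ‖q * ζ ^ a‖ < 1 := fun a => by
    rw [norm_mul, norm_pow, hζ1, one_pow, mul_one]; exact hq
  have hqp : ‖q ^ p‖ < 1 := by
    rw [norm_pow]; exact pow_lt_one₀ (norm_nonneg _) hq hp.pos.ne'
  have hqpp : ‖(q ^ p) ^ p‖ < 1 := by
    rw [norm_pow]; exact pow_lt_one₀ (norm_nonneg _) hqp hp.pos.ne'
  have hq2 : q ^ p ^ 2 = (q ^ p) ^ p := by rw [← pow_mul, pow_two]
  -- the three families
  set A : ℕ → ℂ := fun n => 1 - (q ^ p) ^ (n + 1) with hA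
  set B : ℕ → ℂ := fun n =>
    if p ∣ (n + 1) then (1 - q ^ (n + 1)) ^ p * (1 - (q ^ p) ^ (n + 1))⁻¹ else 1 with hB
  set D : ℕ → ℂ := fun m =>
    (1 - (q ^ p) ^ (m + 1)) ^ p * (1 - ((q ^ p) ^ p) ^ (m + 1))⁻¹ with hD
  set C : ℕ → ℂ := fun m => 1 - ((q ^ p) ^ p) ^ (m + 1) with hC
  have hDne : ∀ m, D m ≠ 0 := fun m =>
    mul_ne_zero (pow_ne_zero _ (factor_ne_zero hqp m)) (inv_ne_zero (factor_ne_zero hqpp m))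
  have hDmul : Multipliable D := multipliable_aux hDne (summable_D hqp hp.pos)
  have hCmul : Multipliable C := multipliable_F hqpp
  have hAmul : Multipliable A := multipliable_F hqp
  -- step 1+2: finite prod of tprods
  have step1 : ∏ a ∈ range p, Fq (q * ζ ^ a) =
      ∏' n : ℕ, ∏ a ∈ range p, (1 - (q * ζ ^ a) ^ (n + 1)) :=
    (Multipliable.tprod_finsetProd (fun a _ => multipliable_F (hqz a))).symm
  have step2 : (∏' n : ℕ, ∏ a ∈ range p, (1 - (q * ζ ^ a) ^ (n + 1))) =
      ∏' n : ℕ, A n * B n := by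
    refine tprod_congr fun n => ?_
    rw [pointwise hp q hζ n, hA, hB]
    by_cases h : p ∣ (n + 1)
    · simp only [if_pos h]
      rw [mul_comm, mul_assoc, inv_mul_cancel₀ (factor_ne_zero hqp n), mul_one]
    · simp only [if_neg h, mul_one]
  -- the injection
  set e : ℕ → ℕ := fun m => p * m + (p - 1) with he
  have hinj : Function.Injective e := by
    intro a b hab
    simp only [he, Nat.add_right_cancel_iff] at hab
    exact Nat.eq_of_mul_eq_mul_left hp.pos hab
  have hem : ∀ m, e m + 1 = p * (m + 1) := fun m => by
    simp only [he]
    rw [add_assoc, Nat.sub_add_cancel hp.one_le, mul_add, mul_one]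
  have hBe : ∀ m, B (e m) = D m := by
    intro m
    have hdvd : p ∣ e m + 1 := ⟨m + 1, hem m⟩
    simp only [hB, hD]
    rw [if_pos hdvd, hem m, pow_mul q p, pow_mul (q ^ p) p]
  have hBone : ∀ n ∉ Set.range e, B n = 1 := by
    intro n hn
    simp only [hB, ite_eq_right_iff]
    intro hdvd
    exfalso
    obtain ⟨k, hk⟩ := hdvd
    have := hp.two_le
    have hkpos : k ≠ 0 := by rintro rfl; simp at hk
    refine hn ⟨k - 1, ?_⟩
    have h2 : e (k - 1) + 1 = p * k := by
      rw [hem (k - 1), Nat.sub_add_cancel (Nat.one_le_iff_ne_zero.mpr hkpos)]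
    omega
  have hBcomp : B ∘ e = D := funext hBe
  have hBmul : Multipliable B :=
    ⟨∏' m, D m, (hinj.hasProd_iff hBone).1 (by rw [hBcomp]; exact hDmul.hasProd)⟩
  have hsupp : Function.mulSupport B ⊆ Set.range e := fun n hn => by
    by_contra h
    exact hn (hBone n h)
  have hBD : ∏' n, B n = ∏' m, D m :=
    (hinj.tprod_eq hsupp).symm.trans (tprod_congr hBe)
  -- step 7: ∏' D * Fq ((q^p)^p) = Fq (q^p) ^ p
  have step7 : (∏' m, D m) * Fq ((q ^ p) ^ p) = Fq (q ^ p) ^ p := by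
    have h1 : (∏' m, D m) * Fq ((q ^ p) ^ p) = ∏' m, (D m * C m) :=
      (Multipliable.tprod_mul hDmul hCmul).symm
    have h2 : ∀ m, D m * C m = ∏ _i ∈ range p, (1 - (q ^ p) ^ (m + 1)) := by
      intro m
      rw [Finset.prod_const, card_range, hD, hC]
      rw [mul_assoc, inv_mul_cancel₀ (factor_ne_zero hqpp m), mul_one]
    rw [h1, tprod_congr h2, Multipliable.tprod_finsetProd (fun i _ => multipliable_F hqp),
      Finset.prod_const, card_range]
    rfl
  -- assemble
  rw [step1, step2, Multipliable.tprod_mul hAmul hBmul, hBD, hq2]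
  have : (∏' n, A n) = Fq (q ^ p) := rfl
  rw [this, mul_assoc, step7, ← pow_succ']

end Aux

section Main
open Finset
local notation "I" => Complex.I

lemma eta_eq (σ : ℂ) :
    eta σ = Complex.exp ((Real.pi : ℂ) * I * σ / 12) *
      Fq (Complex.exp (2 * (Real.pi : ℂ) * I * σ)) := by
  unfold eta Fq
  congr 1
  refine tprod_congr fun n => ?_
  congr 1
  rw [← Complex.exp_nat_mul]
  congr 1
  push_cast
  ring

lemma norm_q_lt_one {τ : ℂ} (hτ : 0 < τ.im) :
    ‖Complex.exp (2 * (Real.pi : ℂ) * I * τ)‖ < 1 := by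
  rw [Complex.norm_exp]
  have hre : (2 * (Real.pi : ℂ) * I * τ).re = -(2 * Real.pi * τ.im) := by
    simp [Complex.mul_re, Complex.mul_im]
  rw [hre]
  have := Real.pi_pos
  have hneg : -(2 * Real.pi * τ.im) < 0 := by nlinarith
  calc Real.exp (-(2 * Real.pi * τ.im)) < Real.exp 0 := Real.exp_lt_exp.2 hneg
    _ = 1 := Real.exp_zero

/-- for a prime `p` and `τ` in the upper half-plane,
`∏_{a=1}^{p-1} η(τ + a/p) = e^{2πi(p-1)/48} η(pτ)^{p+1} / (η(τ) η(p²τ))`. -/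
theorem stmt12 (p : ℕ) (hp : p.Prime) (τ : ℂ) (hτ : 0 < τ.im) :
    ∏ a ∈ Finset.Icc 1 (p - 1), eta (τ + (a : ℂ) / (p : ℂ)) =
      Complex.exp (2 * (Real.pi : ℂ) * Complex.I * ((p : ℂ) - 1) / 48) *
        eta ((p : ℂ) * τ) ^ (p + 1) / (eta τ * eta ((p : ℂ) ^ 2 * τ)) := by
  have hp2 := hp.two_le
  have hpne : (p : ℂ) ≠ 0 := Nat.cast_ne_zero.2 hp.pos.ne'
  set q : ℂ := Complex.exp (2 * (Real.pi : ℂ) * I * τ) with hqdef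
  set ζ : ℂ := Complex.exp (2 * (Real.pi : ℂ) * I / p) with hζdef
  have hζ : IsPrimitiveRoot ζ p := Complex.isPrimitiveRoot_exp p hp.pos.ne'
  have hq : ‖q‖ < 1 := norm_q_lt_one hτ
  have hqp : ‖q ^ p‖ < 1 := by
    rw [norm_pow]; exact pow_lt_one₀ (norm_nonneg _) hq hp.pos.ne'
  have hqp2 : ‖q ^ p ^ 2‖ < 1 := by
    rw [norm_pow]; exact pow_lt_one₀ (norm_nonneg _) hq (by positivity)
  have hζ1 : ‖ζ‖ = 1 := norm_eq_one_of_prim hp.pos hζ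
  have hqz : ∀ a : ℕ, ‖q * ζ ^ a‖ < 1 := fun a => by
    rw [norm_mul, norm_pow, hζ1, one_pow, mul_one]; exact hq
  -- rewrite the etas
  have heta : ∀ a : ℕ, eta (τ + (a : ℂ) / p) =
      Complex.exp ((Real.pi : ℂ) * I * (τ + (a : ℂ) / p) / 12) * Fq (q * ζ ^ a) := by
    intro a
    rw [eta_eq]
    congr 2
    rw [hqdef, hζdef, ← Complex.exp_nat_mul, ← Complex.exp_add]
    congr 1
    ring
  have hetap : eta ((p : ℂ) * τ) =
      Complex.exp ((Real.pi : ℂ) * I * ((p : ℂ) * τ) / 12) * Fq (q ^ p) := by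
    rw [eta_eq]
    congr 2
    rw [hqdef, ← Complex.exp_nat_mul]
    congr 1
    ring
  have hetap2 : eta ((p : ℂ) ^ 2 * τ) =
      Complex.exp ((Real.pi : ℂ) * I * ((p : ℂ) ^ 2 * τ) / 12) * Fq (q ^ p ^ 2) := by
    rw [eta_eq]
    congr 2
    rw [hqdef, ← Complex.exp_nat_mul]
    congr 1
    push_cast
    ring
  have hetat : eta τ = Complex.exp ((Real.pi : ℂ) * I * τ / 12) * Fq q := by
    rw [eta_eq]
  -- the product over range p versus Icc
  have hrange : Finset.range p = insert 0 (Finset.Icc 1 (p - 1)) := by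
    ext x
    simp only [Finset.mem_range, Finset.mem_insert, Finset.mem_Icc]
    omega
  have h0not : 0 ∉ Finset.Icc 1 (p - 1) := by simp
  have hkey := key hp hq hζ
  rw [hrange, Finset.prod_insert h0not] at hkey
  simp only [pow_zero, mul_one] at hkey
  -- Gauss sum
  have hS : (∑ a ∈ Finset.Icc 1 (p - 1), (a : ℂ)) = (p : ℂ) * ((p : ℂ) - 1) / 2 := by
    have h4 : (∑ a ∈ Finset.Icc 1 (p - 1), (a : ℂ)) = ∑ a ∈ Finset.range p, (a : ℂ) := by
      rw [hrange, Finset.sum_insert h0not]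
      simp
    have h2 := Finset.sum_range_id_mul_two p
    have h3 := congrArg (fun n : ℕ => (n : ℂ)) h2
    push_cast [Nat.cast_sub hp.one_le] at h3
    rw [h4]
    linear_combination h3 / 2
  have hcard : (Finset.Icc 1 (p - 1)).card = p - 1 := by
    rw [Nat.card_Icc]
    omega
  -- nonvanishing
  have hFq : Fq q ≠ 0 := F_ne_zero hq
  have hFqp : Fq (q ^ p) ≠ 0 := F_ne_zero hqp
  have hFqp2 : Fq (q ^ p ^ 2) ≠ 0 := F_ne_zero hqp2
  -- assemble
  rw [Finset.prod_congr rfl fun a _ => heta a, hetap, hetap2, hetat,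
    Finset.prod_mul_distrib, ← Complex.exp_sum]
  rw [eq_div_iff (by
    apply mul_ne_zero <;> apply mul_ne_zero
    · exact Complex.exp_ne_zero _
    · exact hFq
    · exact Complex.exp_ne_zero _
    · exact hFqp2)]
  have hsum : (∑ a ∈ Finset.Icc 1 (p - 1), (Real.pi : ℂ) * I * (τ + (a : ℂ) / p) / 12) =
      ((p : ℂ) - 1) * ((Real.pi : ℂ) * I * τ / 12) +
        (Real.pi : ℂ) * I * ((p : ℂ) - 1) / 24 := by
    have : ∀ a ∈ Finset.Icc 1 (p - 1), (Real.pi : ℂ) * I * (τ + (a : ℂ) / p) / 12 =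
        (Real.pi : ℂ) * I * τ / 12 + (Real.pi : ℂ) * I / (12 * p) * (a : ℂ) := by
      intro a _
      field_simp
    rw [Finset.sum_congr rfl this, Finset.sum_add_distrib, Finset.sum_const, hcard,
      ← Finset.mul_sum, hS, nsmul_eq_mul]
    push_cast [Nat.cast_sub hp.one_le]
    field_simp
    ring
  have hexp : Complex.exp (∑ a ∈ Finset.Icc 1 (p - 1),
        (Real.pi : ℂ) * I * (τ + (a : ℂ) / p) / 12) *
      (Complex.exp ((Real.pi : ℂ) * I * τ / 12) *
        Complex.exp ((Real.pi : ℂ) * I * ((p : ℂ) ^ 2 * τ) / 12)) =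
      Complex.exp (2 * (Real.pi : ℂ) * I * ((p : ℂ) - 1) / 48) *
        Complex.exp ((Real.pi : ℂ) * I * ((p : ℂ) * τ) / 12) ^ (p + 1) := by
    rw [hsum, ← Complex.exp_nat_mul, ← Complex.exp_add, ← Complex.exp_add, ← Complex.exp_add]
    congr 1
    push_cast
    field_simp [hpne]
    ring
  calc (Complex.exp (∑ a ∈ Finset.Icc 1 (p - 1), (Real.pi : ℂ) * I * (τ + (a : ℂ) / p) / 12) *
        ∏ a ∈ Finset.Icc 1 (p - 1), Fq (q * ζ ^ a)) *
      (Complex.exp ((Real.pi : ℂ) * I * τ / 12) * Fq q *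
        (Complex.exp ((Real.pi : ℂ) * I * ((p : ℂ) ^ 2 * τ) / 12) * Fq (q ^ p ^ 2))) =
      (Complex.exp (∑ a ∈ Finset.Icc 1 (p - 1), (Real.pi : ℂ) * I * (τ + (a : ℂ) / p) / 12) *
        (Complex.exp ((Real.pi : ℂ) * I * τ / 12) *
          Complex.exp ((Real.pi : ℂ) * I * ((p : ℂ) ^ 2 * τ) / 12))) *
      (Fq q * ((∏ a ∈ Finset.Icc 1 (p - 1), Fq (q * ζ ^ a)) * Fq (q ^ p ^ 2))) := by ring
    _ = (Complex.exp (2 * (Real.pi : ℂ) * I * ((p : ℂ) - 1) / 48) *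
          Complex.exp ((Real.pi : ℂ) * I * ((p : ℂ) * τ) / 12) ^ (p + 1)) *
        Fq (q ^ p) ^ (p + 1) := by
      rw [hexp]
      congr 1
      rw [← hkey]
      ring
    _ = Complex.exp (2 * (Real.pi : ℂ) * I * ((p : ℂ) - 1) / 48) *
        (Complex.exp ((Real.pi : ℂ) * I * ((p : ℂ) * τ) / 12) * Fq (q ^ p)) ^ (p + 1) := by
      rw [mul_pow]
      ring

end Main
end

section
/- For all τ in the upper half-plane, η(τ + 1/2) = e^{2πi/48} · η(2τ)³ / (η(τ) · η(4τ)). -/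
namespace Stmt13Aux
open Complex Filter

lemma summable_log (u : ℕ → ℂ) (hu : Summable fun n ↦ ‖u n‖) :
    Summable fun n ↦ Complex.log (1 - u n) := by
  have h0 : Tendsto (fun n ↦ ‖u n‖) atTop (nhds 0) := hu.tendsto_atTop_zero
  refine Summable.of_norm_bounded_eventually_nat (g := fun n ↦ 3/2 * ‖u n‖) (hu.mul_left _) ?_
  filter_upwards [h0.eventually_le_const (by norm_num : (0:ℝ) < 1/2)] with n hn
  have := Complex.norm_log_one_add_half_le_self (z := -u n) (by simpa using hn)
  simpa [sub_eq_add_neg] using this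

lemma one_sub_ne (u : ℂ) (h : ‖u‖ < 1) : 1 - u ≠ 0 := by
  intro h0
  rw [sub_eq_zero] at h0
  rw [← h0] at h
  simp at h

lemma hasProd_one_sub (u : ℕ → ℂ) (hu : Summable fun n ↦ ‖u n‖) (h1 : ∀ n, ‖u n‖ < 1) :
    HasProd (fun n ↦ 1 - u n) (Complex.exp (∑' n, Complex.log (1 - u n))) := by
  refine HasProd.congr_fun ((summable_log u hu).hasSum.cexp) fun n ↦ ?_
  exact (Complex.exp_log (one_sub_ne _ (h1 n))).symm

lemma mult_one_sub (u : ℕ → ℂ) (hu : Summable fun n ↦ ‖u n‖) (h1 : ∀ n, ‖u n‖ < 1) :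
    Multipliable (fun n ↦ 1 - u n) :=
  ⟨_, hasProd_one_sub u hu h1⟩

lemma tprod_one_sub_ne_zero (u : ℕ → ℂ) (hu : Summable fun n ↦ ‖u n‖)
    (h1 : ∀ n, ‖u n‖ < 1) : (∏' n, (1 - u n)) ≠ 0 := by
  rw [(hasProd_one_sub u hu h1).tprod_eq]
  exact Complex.exp_ne_zero _

lemma summ_geom (s : ℂ) (hs : ‖s‖ < 1) (a b : ℕ) (ha : a ≠ 0) :
    Summable (fun n : ℕ ↦ ‖s ^ (a * n + b + 1)‖) := by
  have h : (fun n : ℕ ↦ ‖s ^ (a * n + b + 1)‖) = fun n ↦ (‖s‖ ^ a) ^ n * ‖s‖ ^ (b + 1) := by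
    funext n
    rw [norm_pow, ← pow_mul]
    ring
  rw [h]
  exact (summable_geometric_of_lt_one (by positivity)
    (pow_lt_one₀ (norm_nonneg s) hs ha)).mul_right _

lemma lt_one_geom (s : ℂ) (hs : ‖s‖ < 1) (a b n : ℕ) : ‖s ^ (a * n + b + 1)‖ < 1 := by
  rw [norm_pow]
  exact pow_lt_one₀ (norm_nonneg s) hs (by omega)

lemma mult_geom (s : ℂ) (hs : ‖s‖ < 1) (a b : ℕ) (ha : a ≠ 0) :
    Multipliable (fun n : ℕ ↦ 1 - s ^ (a * n + b + 1)) :=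
  mult_one_sub _ (summ_geom s hs a b ha) (lt_one_geom s hs a b)

lemma ne_zero_geom (s : ℂ) (hs : ‖s‖ < 1) (a b : ℕ) (ha : a ≠ 0) :
    (∏' n : ℕ, (1 - s ^ (a * n + b + 1))) ≠ 0 :=
  tprod_one_sub_ne_zero _ (summ_geom s hs a b ha) (lt_one_geom s hs a b)

lemma mult_F (s : ℂ) (hs : ‖s‖ < 1) : Multipliable (fun n : ℕ ↦ 1 - s ^ (n + 1)) := by
  have := mult_geom s hs 1 0 one_ne_zero
  simpa using this

lemma ne_zero_F (s : ℂ) (hs : ‖s‖ < 1) : (∏' n : ℕ, (1 - s ^ (n + 1))) ≠ 0 := by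
  have := ne_zero_geom s hs 1 0 one_ne_zero
  simpa using this

/-- The key combinatorial identity `F(-q) F(q) F(q⁴) = F(q²)³`. -/
lemma key (q : ℂ) (hq : ‖q‖ < 1) :
    (∏' n : ℕ, (1 - (-q) ^ (n + 1))) *
        ((∏' n : ℕ, (1 - q ^ (n + 1))) * (∏' n : ℕ, (1 - (q ^ 4) ^ (n + 1)))) =
      (∏' n : ℕ, (1 - (q ^ 2) ^ (n + 1))) ^ 3 := by
  have hq2 : ‖q ^ 2‖ < 1 := by
    rw [norm_pow]; exact pow_lt_one₀ (norm_nonneg q) hq two_ne_zero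
  have hq4 : ‖q ^ 4‖ < 1 := by
    rw [norm_pow]; exact pow_lt_one₀ (norm_nonneg q) hq (by norm_num)
  have hmq : ‖-q‖ < 1 := by simpa using hq
  set Fm := ∏' n : ℕ, (1 - (-q) ^ (n + 1)) with hFm
  set F1 := ∏' n : ℕ, (1 - q ^ (n + 1)) with hF1
  set F2 := ∏' n : ℕ, (1 - (q ^ 2) ^ (n + 1)) with hF2
  set F4 := ∏' n : ℕ, (1 - (q ^ 4) ^ (n + 1)) with hF4
  set E := ∏' k : ℕ, (1 - (q ^ 2) ^ (2 * k + 1)) with hE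
  -- h n = (1 - q^(n+1)) * (1 - (-q)^(n+1))
  set h : ℕ → ℂ := fun n ↦ (1 - q ^ (n + 1)) * (1 - (-q) ^ (n + 1)) with hh
  have heven : (fun k ↦ h (2 * k)) = fun k ↦ 1 - (q ^ 2) ^ (2 * k + 1) := by
    funext k
    have hodd : Odd (2 * k + 1) := odd_two_mul_add_one k
    simp only [hh, hodd.neg_pow]
    rw [show (q ^ 2) ^ (2 * k + 1) = (q ^ (2 * k + 1)) ^ 2 by
      rw [← pow_mul, ← pow_mul]; ring_nf]
    ring
  have hodd : (fun k ↦ h (2 * k + 1)) = fun k ↦ (1 - (q ^ 2) ^ (k + 1)) * (1 - (q ^ 2) ^ (k + 1)) := by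
    funext k
    have hev : Even (2 * k + 1 + 1) := by refine ⟨k + 1, by ring⟩
    simp only [hh, hev.neg_pow]
    rw [show (q ^ 2) ^ (k + 1) = q ^ (2 * k + 1 + 1) by rw [← pow_mul]; ring_nf]
  have hmE : Multipliable fun k : ℕ ↦ 1 - (q ^ 2) ^ (2 * k + 1) := by
    have := mult_geom (q ^ 2) hq2 2 0 two_ne_zero
    simpa using this
  have hmF2 : Multipliable fun k : ℕ ↦ 1 - (q ^ 2) ^ (k + 1) := mult_F _ hq2
  have hsplit : E * (F2 * F2) = F1 * Fm := by
    have he : Multipliable fun k ↦ h (2 * k) := by rw [heven]; exact hmE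
    have ho : Multipliable fun k ↦ h (2 * k + 1) := by rw [hodd]; exact hmF2.mul hmF2
    have h1 := tprod_even_mul_odd he ho
    rw [heven, hodd] at h1
    rw [hE, hF2, ← Multipliable.tprod_mul hmF2 hmF2, h1, hh, hF1, hFm,
      Multipliable.tprod_mul (mult_F q hq) (mult_F (-q) hmq)]
  have hC : E * F4 = F2 := by
    set g : ℕ → ℂ := fun n ↦ 1 - (q ^ 2) ^ (n + 1) with hg
    have he : Multipliable fun k ↦ g (2 * k) := by
      have : (fun k ↦ g (2 * k)) = fun k ↦ 1 - (q ^ 2) ^ (2 * k + 1) := by funext k; rfl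
      rw [this]; exact hmE
    have heq : (fun k ↦ g (2 * k + 1)) = fun k ↦ 1 - (q ^ 4) ^ (k + 1) := by
      funext k
      simp only [hg]
      rw [show (q ^ 4) ^ (k + 1) = (q ^ 2) ^ (2 * k + 1 + 1) by
        rw [← pow_mul, ← pow_mul]; ring_nf]
    have ho : Multipliable fun k ↦ g (2 * k + 1) := by rw [heq]; exact mult_F _ hq4
    have h1 := tprod_even_mul_odd he ho
    rw [heq] at h1
    exact h1
  linear_combination F2 ^ 2 * hC - F4 * hsplit
end Stmt13Aux


/-- for `τ` in the upper half-plane,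
`η(τ + 1/2) = e^{2πi/48} η(2τ)³ / (η(τ) η(4τ))`. -/
theorem stmt13 (τ : ℂ) (hτ : 0 < τ.im) :
    eta (τ + 1 / 2) =
      Complex.exp (2 * (Real.pi : ℂ) * Complex.I / 48) *
        eta (2 * τ) ^ 3 / (eta τ * eta (4 * τ)) := by
  set q : ℂ := Complex.exp (2 * (Real.pi : ℂ) * Complex.I * τ) with hqdef
  have hq : ‖q‖ < 1 := by
    rw [hqdef, Complex.norm_exp]
    rw [Real.exp_lt_one_iff]
    have : (2 * (Real.pi : ℂ) * Complex.I * τ).re = -(2 * Real.pi * τ.im) := by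
      simp [Complex.mul_re, Complex.mul_im]
    rw [this, neg_lt, neg_zero]
    positivity
  have hq2 : ‖q ^ 2‖ < 1 := by
    rw [norm_pow]; exact pow_lt_one₀ (norm_nonneg q) hq two_ne_zero
  have hq4 : ‖q ^ 4‖ < 1 := by
    rw [norm_pow]; exact pow_lt_one₀ (norm_nonneg q) hq (by norm_num)
  -- rewrite each eta factor
  have e1 : ∀ n : ℕ, Complex.exp (2 * (Real.pi : ℂ) * Complex.I * ((n : ℂ) + 1) * τ)
      = q ^ (n + 1) := by
    intro n
    rw [hqdef, ← Complex.exp_nat_mul]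
    congr 1
    push_cast
    ring
  have e2 : ∀ n : ℕ, Complex.exp (2 * (Real.pi : ℂ) * Complex.I * ((n : ℂ) + 1) * (2 * τ))
      = (q ^ 2) ^ (n + 1) := by
    intro n
    rw [← pow_mul, hqdef, ← Complex.exp_nat_mul]
    congr 1
    push_cast
    ring
  have e4 : ∀ n : ℕ, Complex.exp (2 * (Real.pi : ℂ) * Complex.I * ((n : ℂ) + 1) * (4 * τ))
      = (q ^ 4) ^ (n + 1) := by
    intro n
    rw [← pow_mul, hqdef, ← Complex.exp_nat_mul]
    congr 1
    push_cast
    ring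
  have em : ∀ n : ℕ, Complex.exp (2 * (Real.pi : ℂ) * Complex.I * ((n : ℂ) + 1) * (τ + 1 / 2))
      = (-q) ^ (n + 1) := by
    intro n
    rw [neg_pow, ← Complex.exp_pi_mul_I, hqdef, ← Complex.exp_nat_mul, ← Complex.exp_nat_mul,
      ← Complex.exp_add]
    congr 1
    push_cast
    ring
  rw [show eta (τ + 1 / 2) = Complex.exp ((Real.pi : ℂ) * Complex.I * (τ + 1 / 2) / 12) *
      ∏' n : ℕ, (1 - (-q) ^ (n + 1)) by
    unfold eta; congr 1; exact tprod_congr fun n ↦ by rw [em n]]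
  rw [show eta (2 * τ) = Complex.exp ((Real.pi : ℂ) * Complex.I * (2 * τ) / 12) *
      ∏' n : ℕ, (1 - (q ^ 2) ^ (n + 1)) by
    unfold eta; congr 1; exact tprod_congr fun n ↦ by rw [e2 n]]
  rw [show eta (4 * τ) = Complex.exp ((Real.pi : ℂ) * Complex.I * (4 * τ) / 12) *
      ∏' n : ℕ, (1 - (q ^ 4) ^ (n + 1)) by
    unfold eta; congr 1; exact tprod_congr fun n ↦ by rw [e4 n]]
  rw [show eta τ = Complex.exp ((Real.pi : ℂ) * Complex.I * τ / 12) *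
      ∏' n : ℕ, (1 - q ^ (n + 1)) by
    unfold eta; congr 1; exact tprod_congr fun n ↦ by rw [e1 n]]
  have hden : Complex.exp ((Real.pi : ℂ) * Complex.I * τ / 12) *
      (∏' n : ℕ, (1 - q ^ (n + 1))) *
      (Complex.exp ((Real.pi : ℂ) * Complex.I * (4 * τ) / 12) *
      ∏' n : ℕ, (1 - (q ^ 4) ^ (n + 1))) ≠ 0 :=
    mul_ne_zero (mul_ne_zero (Complex.exp_ne_zero _) (Stmt13Aux.ne_zero_F q hq))
      (mul_ne_zero (Complex.exp_ne_zero _) (Stmt13Aux.ne_zero_F _ hq4))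
  rw [eq_div_iff hden]
  have hkey := Stmt13Aux.key q hq
  have hexps : Complex.exp ((Real.pi : ℂ) * Complex.I * (τ + 1 / 2) / 12) *
      (Complex.exp ((Real.pi : ℂ) * Complex.I * τ / 12) *
        Complex.exp ((Real.pi : ℂ) * Complex.I * (4 * τ) / 12)) =
      Complex.exp (2 * (Real.pi : ℂ) * Complex.I / 48) *
        Complex.exp ((Real.pi : ℂ) * Complex.I * (2 * τ) / 12) ^ 3 := by
    rw [show (Complex.exp ((Real.pi : ℂ) * Complex.I * (2 * τ) / 12)) ^ 3 =
        Complex.exp (((3 : ℕ) : ℂ) * ((Real.pi : ℂ) * Complex.I * (2 * τ) / 12)) by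
      rw [Complex.exp_nat_mul]]
    rw [← Complex.exp_add, ← Complex.exp_add, ← Complex.exp_add]
    congr 1
    push_cast
    ring
  calc Complex.exp ((Real.pi : ℂ) * Complex.I * (τ + 1 / 2) / 12) *
        (∏' n : ℕ, (1 - (-q) ^ (n + 1))) *
        (Complex.exp ((Real.pi : ℂ) * Complex.I * τ / 12) *
          (∏' n : ℕ, (1 - q ^ (n + 1))) *
          (Complex.exp ((Real.pi : ℂ) * Complex.I * (4 * τ) / 12) *
            ∏' n : ℕ, (1 - (q ^ 4) ^ (n + 1))))
      = (Complex.exp ((Real.pi : ℂ) * Complex.I * (τ + 1 / 2) / 12) *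
          (Complex.exp ((Real.pi : ℂ) * Complex.I * τ / 12) *
            Complex.exp ((Real.pi : ℂ) * Complex.I * (4 * τ) / 12))) *
        ((∏' n : ℕ, (1 - (-q) ^ (n + 1))) *
          ((∏' n : ℕ, (1 - q ^ (n + 1))) * (∏' n : ℕ, (1 - (q ^ 4) ^ (n + 1))))) := by ring
    _ = (Complex.exp (2 * (Real.pi : ℂ) * Complex.I / 48) *
          Complex.exp ((Real.pi : ℂ) * Complex.I * (2 * τ) / 12) ^ 3) *
        (∏' n : ℕ, (1 - (q ^ 2) ^ (n + 1))) ^ 3 := by rw [hexps, hkey]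
    _ = Complex.exp (2 * (Real.pi : ℂ) * Complex.I / 48) *
        (Complex.exp ((Real.pi : ℂ) * Complex.I * (2 * τ) / 12) *
          ∏' n : ℕ, (1 - (q ^ 2) ^ (n + 1))) ^ 3 := by ring
end

section
/- Let N be a positive integer, p a prime dividing N, and d' a divisor of N/p. In D = (ℤ/Nℤ)² ⊕ (ℤ/pℤ)² with quadratic form Q(x,y,z,w) = xy/N + zw/p mod ℤ, the characteristic functions of the self-dual isotropic subgroups H⁽¹⁾ = H_{d',0,N/d'} ⊕ H_{1,0,p}, H⁽²⁾ = H_{d',0,N/d'} ⊕ H_{p,0,1}, H⁽³⁾ = H_{pd',0,N/(pd')} ⊕ H_{1,0,p}, H⁽⁴⁾ = H_{pd',0,N/(pd')} ⊕ H_{p,0,1}, and H⁽⁵⁾_a, H⁽⁶⁾_a for a ∈ (ℤ/pℤ)* satisfy the linear relation v^{H⁽¹⁾} − v^{H⁽²⁾} − v^{H⁽³⁾} + v^{H⁽⁴⁾} + ∑_{a=1}^{p−1}(−v^{H⁽⁵⁾_a} + v^{H⁽⁶⁾_a}) = 0 in ℂ[D]. -/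
open AddSubgroup

/-- The discriminant group `(ℤ/Nℤ)² ⊕ (ℤ/pℤ)²`. -/
abbrev DD (N p : ℕ) : Type := (ZMod N × ZMod N) × (ZMod p × ZMod p)

/-- The subgroup `H_{x,0,z}` of `(ℤ/Mℤ)²` generated by `(x,0)` and `(0,z)`. -/
def Hxz (M x z : ℕ) : AddSubgroup (ZMod M × ZMod M) :=
  AddSubgroup.closure {((x : ZMod M), (0 : ZMod M)), ((0 : ZMod M), (z : ZMod M))}

/-- The characteristic function `v^S = ∑_{γ ∈ S} e_γ` of a subset `S`, as an element of the
group algebra realised as functions `D → ℂ`. -/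
noncomputable def vH {D : Type*} (S : Set D) : D → ℂ := Set.indicator S 1

/-- The subgroup `H⁽⁵⁾_a` of `(ℤ/Nℤ)² ⊕ (ℤ/pℤ)²`, generated by `(d',0,a,0)`,
`(0, N/(pd'), 0, −a⁻¹)`, `(0,0,p,0)` and `(0,0,0,p)`. -/
def H5 (N p d' : ℕ) (a : (ZMod p)ˣ) : AddSubgroup (DD N p) :=
  AddSubgroup.closure
    {(((d' : ZMod N), 0), ((a : ZMod p), 0)),
     ((0, ((N / (p * d') : ℕ) : ZMod N)), (0, -((a⁻¹ : (ZMod p)ˣ) : ZMod p))),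
     ((0, 0), ((p : ZMod p), 0)),
     ((0, 0), (0, (p : ZMod p)))}

/-- The subgroup `H⁽⁶⁾_a`, defined as `H⁽⁵⁾_a` with the roles swapped: generated by
`(d',0,0,−a⁻¹)`, `(0, N/(pd'), a, 0)`, `(0,0,p,0)` and `(0,0,0,p)`. -/
def H6 (N p d' : ℕ) (a : (ZMod p)ˣ) : AddSubgroup (DD N p) :=
  AddSubgroup.closure
    {(((d' : ZMod N), 0), (0, -((a⁻¹ : (ZMod p)ˣ) : ZMod p))),
     ((0, ((N / (p * d') : ℕ) : ZMod N)), ((a : ZMod p), 0)),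
     ((0, 0), ((p : ZMod p), 0)),
     ((0, 0), (0, (p : ZMod p)))}

/-! ### Auxiliary lemmas -/

lemma vH_eq_ite {D : Type*} (S : Set D) (P : Prop) [Decidable P] (γ : D) (h : γ ∈ S ↔ P) :
    vH S γ = if P then 1 else 0 := by
  classical
  rw [vH, Set.indicator_apply]
  by_cases hp : P
  · rw [if_pos (h.mpr hp), if_pos hp]; rfl
  · rw [if_neg (fun hs => hp (h.mp hs)), if_neg hp]

lemma int_cast_eq_of_dvd {p : ℕ} {m m' : ℤ} (h : (p:ℤ) ∣ m - m') : (m : ZMod p) = m' := by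
  have := (ZMod.intCast_zmod_eq_zero_iff_dvd (m - m') p).mpr h
  push_cast at this
  linear_combination this

lemma key_inj {N : ℕ} [NeZero N] (p d : ℕ) (hdN : d ∣ N) (hpd : p ∣ N / d)
    {m m' : ℤ} (h : (m * (d:ZMod N)) = m' * (d:ZMod N)) : (m : ZMod p) = (m' : ZMod p) := by
  have hd0 : d ≠ 0 := by
    rintro rfl
    exact (NeZero.ne N) (Nat.eq_zero_of_zero_dvd hdN)
  obtain ⟨e, he⟩ := hdN
  have hpe : p ∣ e := by
    have : N / d = e := by rw [he, Nat.mul_div_cancel_left _ (Nat.pos_of_ne_zero hd0)]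
    rwa [this] at hpd
  have h2 : (N:ℤ) ∣ (m - m') * d := by
    have h3 : (((m - m') * d : ℤ) : ZMod N) = 0 := by
      push_cast
      linear_combination h
    exact (ZMod.intCast_zmod_eq_zero_iff_dvd _ N).mp h3
  rw [he] at h2
  push_cast at h2
  have h4 : (e : ℤ) ∣ m - m' := by
    have hd0' : (d:ℤ) ≠ 0 := Int.natCast_ne_zero.mpr hd0
    rcases h2 with ⟨c, hc⟩
    refine ⟨c, ?_⟩
    have : (m - m') * d = e * c * d := by rw [hc]; ring
    exact mul_right_cancel₀ hd0' this
  exact int_cast_eq_of_dvd (dvd_trans (Int.natCast_dvd_natCast.mpr hpe) h4)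

lemma mem_Hxz (M x z : ℕ) (u v : ZMod M) :
    (u, v) ∈ Hxz M x z ↔ (∃ m : ℤ, u = m * (x:ZMod M)) ∧ (∃ n : ℤ, v = n * (z:ZMod M)) := by
  rw [Hxz, AddSubgroup.mem_closure_pair]
  constructor
  · rintro ⟨m, n, h⟩
    rw [Prod.ext_iff] at h
    simp only [Prod.fst_add, Prod.snd_add, Prod.smul_mk, smul_zero, zsmul_eq_mul,
      add_zero, zero_add] at h
    exact ⟨⟨m, h.1.symm⟩, ⟨n, h.2.symm⟩⟩
  · rintro ⟨⟨m, rfl⟩, ⟨n, rfl⟩⟩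
    exact ⟨m, n, by simp [Prod.ext_iff, zsmul_eq_mul]⟩

lemma closure_zeros (N p : ℕ) (g1 g2 : DD N p) :
    AddSubgroup.closure
        ({g1, g2, ((0,0),((p:ZMod p),0)), ((0,0),(0,(p:ZMod p)))} : Set (DD N p))
      = AddSubgroup.closure {g1, g2} := by
  have h0 : ((p : ZMod p)) = 0 := ZMod.natCast_self p
  apply le_antisymm
  · apply (closure_le _).2
    rintro x hx
    simp only [Set.mem_insert_iff, Set.mem_singleton_iff] at hx
    rcases hx with rfl | rfl | rfl | rfl
    · exact subset_closure (by simp)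
    · exact subset_closure (by simp)
    · rw [h0]; exact zero_mem _
    · rw [h0]; exact zero_mem _
  · apply AddSubgroup.closure_mono
    intro x hx
    simp only [Set.mem_insert_iff, Set.mem_singleton_iff] at hx ⊢
    tauto

lemma mem_H5 (N p d' : ℕ) (a : (ZMod p)ˣ) (γ : DD N p) :
    γ ∈ H5 N p d' a ↔ ∃ m n : ℤ,
      γ = ((m * (d' : ZMod N), n * ((N / (p * d') : ℕ) : ZMod N)),
           (m * (a : ZMod p), n * (-((a⁻¹ : (ZMod p)ˣ) : ZMod p)))) := by
  rw [H5, closure_zeros, AddSubgroup.mem_closure_pair]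
  constructor
  · rintro ⟨m, n, h⟩
    exact ⟨m, n, by rw [← h]; simp [Prod.ext_iff, zsmul_eq_mul]⟩
  · rintro ⟨m, n, rfl⟩
    exact ⟨m, n, by simp [Prod.ext_iff, zsmul_eq_mul]⟩

lemma mem_H6 (N p d' : ℕ) (a : (ZMod p)ˣ) (γ : DD N p) :
    γ ∈ H6 N p d' a ↔ ∃ m n : ℤ,
      γ = ((m * (d' : ZMod N), n * ((N / (p * d') : ℕ) : ZMod N)),
           (n * (a : ZMod p), m * (-((a⁻¹ : (ZMod p)ˣ) : ZMod p)))) := by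
  rw [H6, closure_zeros, AddSubgroup.mem_closure_pair]
  constructor
  · rintro ⟨m, n, h⟩
    exact ⟨m, n, by rw [← h]; simp [Prod.ext_iff, zsmul_eq_mul]⟩
  · rintro ⟨m, n, rfl⟩
    exact ⟨m, n, by simp [Prod.ext_iff, zsmul_eq_mul]⟩

lemma sum_I_unique {p : ℕ} [NeZero p] {P : (ZMod p)ˣ → Prop} [DecidablePred P]
    (a₀ : (ZMod p)ˣ) (h : ∀ a, P a ↔ a = a₀) :
    ∑ a : (ZMod p)ˣ, (if P a then (1:ℂ) else 0) = 1 := by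
  simp only [h]
  simp

lemma sum_I_none {p : ℕ} [NeZero p] {P : (ZMod p)ˣ → Prop} [DecidablePred P]
    (h : ∀ a, ¬ P a) :
    ∑ a : (ZMod p)ˣ, (if P a then (1:ℂ) else 0) = 0 := by
  simp only [h]
  simp

lemma count_lemma (p : ℕ) [Fact p.Prime] (w x y z : ZMod p) :
    ((if x = 0 ∧ z = 0 then (1:ℂ) else 0) - (if x = 0 ∧ y = 0 then 1 else 0)
      - (if w = 0 ∧ z = 0 then 1 else 0) + (if w = 0 ∧ y = 0 then 1 else 0))
      + ∑ a : (ZMod p)ˣ,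
          (-(if y = w * (a : ZMod p) ∧ z = x * (-((a⁻¹ : (ZMod p)ˣ) : ZMod p)) then (1:ℂ) else 0)
            + (if y = x * (a : ZMod p) ∧ z = w * (-((a⁻¹ : (ZMod p)ˣ) : ZMod p)) then 1 else 0))
      = 0 := by
  classical
  rw [Finset.sum_add_distrib, Finset.sum_neg_distrib]
  rcases eq_or_ne w 0 with hw | hw <;> rcases eq_or_ne x 0 with hx | hx
  · -- w = 0, x = 0
    subst hw hx
    ring
  · -- w = 0, x ≠ 0
    subst hw
    rcases eq_or_ne z 0 with hz | hz
    · -- z = 0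
      subst hz
      have hS1 : ∑ a : (ZMod p)ˣ,
          (if y = 0 * (a : ZMod p) ∧ (0:ZMod p) = x * (-((a⁻¹ : (ZMod p)ˣ) : ZMod p))
            then (1:ℂ) else 0) = 0 := by
        apply sum_I_none
        rintro a ⟨-, h2⟩
        exact (mul_ne_zero hx (neg_ne_zero.mpr (Units.ne_zero a⁻¹))) h2.symm
      rw [hS1]
      rcases eq_or_ne y 0 with hy | hy
      · subst hy
        have hS2 : ∑ a : (ZMod p)ˣ,
            (if (0:ZMod p) = x * (a : ZMod p) ∧ (0:ZMod p) = 0 * (-((a⁻¹ : (ZMod p)ˣ) : ZMod p))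
              then (1:ℂ) else 0) = 0 := by
          apply sum_I_none
          rintro a ⟨h1, -⟩
          exact (mul_ne_zero hx (Units.ne_zero a)) h1.symm
        rw [hS2]
        simp [hx]
      · have hS2 : ∑ a : (ZMod p)ˣ,
            (if y = x * (a : ZMod p) ∧ (0:ZMod p) = 0 * (-((a⁻¹ : (ZMod p)ˣ) : ZMod p))
              then (1:ℂ) else 0) = 1 := by
          apply sum_I_unique ((Units.mk0 x hx)⁻¹ * Units.mk0 y hy)
          intro a
          constructor
          · rintro ⟨h1, -⟩
            apply Units.ext
            push_cast [Units.val_inv_eq_inv_val, Units.val_mk0]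
            field_simp
            rw [h1]; ring
          · rintro rfl
            constructor
            · push_cast [Units.val_inv_eq_inv_val, Units.val_mk0]
              field_simp
            · rw [zero_mul]
        rw [hS2]
        simp [hx, hy]
    · -- z ≠ 0
      have hS2 : ∑ a : (ZMod p)ˣ,
          (if y = x * (a : ZMod p) ∧ z = 0 * (-((a⁻¹ : (ZMod p)ˣ) : ZMod p))
            then (1:ℂ) else 0) = 0 := by
        apply sum_I_none
        rintro a ⟨-, h2⟩
        rw [zero_mul] at h2
        exact hz h2
      rw [hS2]
      rcases eq_or_ne y 0 with hy | hy
      · subst hy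
        have hS1 : ∑ a : (ZMod p)ˣ,
            (if (0:ZMod p) = 0 * (a : ZMod p) ∧ z = x * (-((a⁻¹ : (ZMod p)ˣ) : ZMod p))
              then (1:ℂ) else 0) = 1 := by
          apply sum_I_unique (-(Units.mk0 x hx) * (Units.mk0 z hz)⁻¹)
          intro a
          have hval : z = x * (-(((-(Units.mk0 x hx) * (Units.mk0 z hz)⁻¹)⁻¹ : (ZMod p)ˣ) : ZMod p)) := by
            push_cast [Units.val_inv_eq_inv_val, Units.val_mk0]
            field_simp
          constructor
          · rintro ⟨-, h2⟩
            have h3 : x * (-((a⁻¹ : (ZMod p)ˣ) : ZMod p))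
                = x * (-(((-(Units.mk0 x hx) * (Units.mk0 z hz)⁻¹)⁻¹ : (ZMod p)ˣ) : ZMod p)) :=
              h2.symm.trans hval
            have h4 := neg_injective (mul_left_cancel₀ hx h3)
            exact inv_injective (Units.ext h4)
          · rintro rfl
            exact ⟨(zero_mul _).symm, hval⟩
        rw [hS1]
        simp [hx, hz]
      · have hS1 : ∑ a : (ZMod p)ˣ,
            (if y = 0 * (a : ZMod p) ∧ z = x * (-((a⁻¹ : (ZMod p)ˣ) : ZMod p))
              then (1:ℂ) else 0) = 0 := by
          apply sum_I_none
          rintro a ⟨h1, -⟩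
          rw [zero_mul] at h1
          exact hy h1
        rw [hS1]
        simp [hx, hy, hz]
  · -- w ≠ 0, x = 0 (mirror)
    subst hx
    rcases eq_or_ne z 0 with hz | hz
    · subst hz
      have hS2 : ∑ a : (ZMod p)ˣ,
          (if y = 0 * (a : ZMod p) ∧ (0:ZMod p) = w * (-((a⁻¹ : (ZMod p)ˣ) : ZMod p))
            then (1:ℂ) else 0) = 0 := by
        apply sum_I_none
        rintro a ⟨-, h2⟩
        exact (mul_ne_zero hw (neg_ne_zero.mpr (Units.ne_zero a⁻¹))) h2.symm
      rw [hS2]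
      rcases eq_or_ne y 0 with hy | hy
      · subst hy
        have hS1 : ∑ a : (ZMod p)ˣ,
            (if (0:ZMod p) = w * (a : ZMod p) ∧ (0:ZMod p) = 0 * (-((a⁻¹ : (ZMod p)ˣ) : ZMod p))
              then (1:ℂ) else 0) = 0 := by
          apply sum_I_none
          rintro a ⟨h1, -⟩
          exact (mul_ne_zero hw (Units.ne_zero a)) h1.symm
        rw [hS1]
        simp [hw]
      · have hS1 : ∑ a : (ZMod p)ˣ,
            (if y = w * (a : ZMod p) ∧ (0:ZMod p) = 0 * (-((a⁻¹ : (ZMod p)ˣ) : ZMod p))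
              then (1:ℂ) else 0) = 1 := by
          apply sum_I_unique ((Units.mk0 w hw)⁻¹ * Units.mk0 y hy)
          intro a
          constructor
          · rintro ⟨h1, -⟩
            apply Units.ext
            push_cast [Units.val_inv_eq_inv_val, Units.val_mk0]
            field_simp
            rw [h1]; ring
          · rintro rfl
            constructor
            · push_cast [Units.val_inv_eq_inv_val, Units.val_mk0]
              field_simp
            · rw [zero_mul]
        rw [hS1]
        simp [hw, hy]
    · have hS1 : ∑ a : (ZMod p)ˣ,
          (if y = w * (a : ZMod p) ∧ z = 0 * (-((a⁻¹ : (ZMod p)ˣ) : ZMod p))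
            then (1:ℂ) else 0) = 0 := by
        apply sum_I_none
        rintro a ⟨-, h2⟩
        rw [zero_mul] at h2
        exact hz h2
      rw [hS1]
      rcases eq_or_ne y 0 with hy | hy
      · subst hy
        have hS2 : ∑ a : (ZMod p)ˣ,
            (if (0:ZMod p) = 0 * (a : ZMod p) ∧ z = w * (-((a⁻¹ : (ZMod p)ˣ) : ZMod p))
              then (1:ℂ) else 0) = 1 := by
          apply sum_I_unique (-(Units.mk0 w hw) * (Units.mk0 z hz)⁻¹)
          intro a
          have hval : z = w * (-(((-(Units.mk0 w hw) * (Units.mk0 z hz)⁻¹)⁻¹ : (ZMod p)ˣ) : ZMod p)) := by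
            push_cast [Units.val_inv_eq_inv_val, Units.val_mk0]
            field_simp
          constructor
          · rintro ⟨-, h2⟩
            have h3 : w * (-((a⁻¹ : (ZMod p)ˣ) : ZMod p))
                = w * (-(((-(Units.mk0 w hw) * (Units.mk0 z hz)⁻¹)⁻¹ : (ZMod p)ˣ) : ZMod p)) :=
              h2.symm.trans hval
            have h4 := neg_injective (mul_left_cancel₀ hw h3)
            exact inv_injective (Units.ext h4)
          · rintro rfl
            exact ⟨(zero_mul _).symm, hval⟩
        rw [hS2]
        simp [hw, hz]
      · have hS2 : ∑ a : (ZMod p)ˣ,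
            (if y = 0 * (a : ZMod p) ∧ z = w * (-((a⁻¹ : (ZMod p)ˣ) : ZMod p))
              then (1:ℂ) else 0) = 0 := by
          apply sum_I_none
          rintro a ⟨h1, -⟩
          rw [zero_mul] at h1
          exact hy h1
        rw [hS2]
        simp [hw, hy, hz]
  · -- w ≠ 0, x ≠ 0
    have hSS : ∑ a : (ZMod p)ˣ,
        (if y = x * (a : ZMod p) ∧ z = w * (-((a⁻¹ : (ZMod p)ˣ) : ZMod p)) then (1:ℂ) else 0)
        = ∑ a : (ZMod p)ˣ,
        (if y = w * (a : ZMod p) ∧ z = x * (-((a⁻¹ : (ZMod p)ˣ) : ZMod p)) then (1:ℂ) else 0) := by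
      set c : (ZMod p)ˣ := (Units.mk0 x hx)⁻¹ * Units.mk0 w hw with hc
      rw [← Equiv.sum_comp (Equiv.mulLeft c)
        (fun a : (ZMod p)ˣ =>
          (if y = x * (a : ZMod p) ∧ z = w * (-((a⁻¹ : (ZMod p)ˣ) : ZMod p)) then (1:ℂ) else 0))]
      apply Finset.sum_congr rfl
      intro a _
      have e1 : x * (((Equiv.mulLeft c a : (ZMod p)ˣ)) : ZMod p) = w * (a : ZMod p) := by
        simp only [Equiv.coe_mulLeft, hc]
        push_cast [Units.val_inv_eq_inv_val, Units.val_mk0]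
        field_simp
      have e2 : w * (-(((Equiv.mulLeft c a : (ZMod p)ˣ)⁻¹ : (ZMod p)ˣ) : ZMod p))
          = x * (-((a⁻¹ : (ZMod p)ˣ) : ZMod p)) := by
        simp only [Equiv.coe_mulLeft, hc, mul_inv_rev, mul_inv]
        push_cast [Units.val_inv_eq_inv_val, Units.val_mk0]
        field_simp
      simp only [e1, e2]
    rw [hSS]
    simp only [hx, hw, false_and, if_false]
    ring

/-! ### Main theorem -/

/-- the linear relation
`v^{H⁽¹⁾} − v^{H⁽²⁾} − v^{H⁽³⁾} + v^{H⁽⁴⁾} + ∑_{a ∈ (ℤ/pℤ)*} (−v^{H⁽⁵⁾_a} + v^{H⁽⁶⁾_a}) = 0`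
in `ℂ[(ℤ/Nℤ)² ⊕ (ℤ/pℤ)²]` among characteristic functions of self-dual isotropic
subgroups. -/
theorem stmt15 (N p : ℕ) [NeZero N] [NeZero p] (hp : p.Prime) (hpN : p ∣ N)
    (d' : ℕ) (hd' : d' ∣ N / p) :
    vH (((Hxz N d' (N / d')).prod (Hxz p 1 p) : AddSubgroup (DD N p)) : Set (DD N p))
      - vH (((Hxz N d' (N / d')).prod (Hxz p p 1) : AddSubgroup (DD N p)) : Set (DD N p))
      - vH (((Hxz N (p * d') (N / (p * d'))).prod (Hxz p 1 p) : AddSubgroup (DD N p)) :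
          Set (DD N p))
      + vH (((Hxz N (p * d') (N / (p * d'))).prod (Hxz p p 1) : AddSubgroup (DD N p)) :
          Set (DD N p))
      + ∑ a : (ZMod p)ˣ,
          (-vH ((H5 N p d' a : AddSubgroup (DD N p)) : Set (DD N p))
            + vH ((H6 N p d' a : AddSubgroup (DD N p)) : Set (DD N p)))
      = 0 := by
  classical
  haveI : Fact p.Prime := ⟨hp⟩
  -- divisibility bookkeeping
  have hd'N : d' ∣ N := hd'.trans (Nat.div_dvd_of_dvd hpN)
  have hpd'N : p * d' ∣ N := by
    obtain ⟨k, hk⟩ := hd'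
    exact ⟨k, by rw [← Nat.mul_div_cancel' hpN, hk, mul_assoc]⟩
  have hpNd' : p ∣ N / d' := (Nat.dvd_div_iff_mul_dvd hd'N).mpr (by rwa [mul_comm p d'] at hpd'N)
  have hdvd2 : N / (p * d') ∣ N := Nat.div_dvd_of_dvd hpd'N
  have hp2 : p ∣ N / (N / (p * d')) := by
    rw [Nat.div_div_self hpd'N (NeZero.ne N)]
    exact dvd_mul_right p d'
  have h1 : p * (N / (p * d')) = N / d' := by
    have : N / (p * d') = N / d' / p := by
      rw [Nat.div_div_eq_div_mul, mul_comm d' p]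
    rw [this, Nat.mul_div_cancel' hpNd']
  -- cast facts
  have hc1 : ((p * d' : ℕ) : ZMod N) = (p : ZMod N) * (d' : ZMod N) := by push_cast; ring
  have hc2 : ((N / d' : ℕ) : ZMod N) = (p : ZMod N) * ((N / (p * d') : ℕ) : ZMod N) := by
    rw [← h1]; push_cast; ring
  funext γ
  obtain ⟨⟨u, v⟩, ⟨y, z⟩⟩ := γ
  simp only [Pi.add_apply, Pi.sub_apply, Pi.neg_apply, Finset.sum_apply, Pi.zero_apply]
  -- membership of the second factor subgroups
  have hyz1 : ∀ y' z' : ZMod p, (y', z') ∈ Hxz p 1 p ↔ z' = 0 := by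
    intro y' z'
    rw [mem_Hxz]
    constructor
    · rintro ⟨-, n', hn'⟩
      rw [hn', ZMod.natCast_self, mul_zero]
    · intro h
      refine ⟨⟨(y'.val : ℤ), ?_⟩, ⟨0, ?_⟩⟩
      · push_cast
        rw [ZMod.natCast_val, ZMod.cast_id, mul_one]
      · rw [h]; push_cast; ring
  have hyz2 : ∀ y' z' : ZMod p, (y', z') ∈ Hxz p p 1 ↔ y' = 0 := by
    intro y' z'
    rw [mem_Hxz]
    constructor
    · rintro ⟨⟨m', hm'⟩, -⟩
      rw [hm', ZMod.natCast_self, mul_zero]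
    · intro h
      refine ⟨⟨0, ?_⟩, ⟨(z'.val : ℤ), ?_⟩⟩
      · rw [h]; push_cast; ring
      · push_cast
        rw [ZMod.natCast_val, ZMod.cast_id, mul_one]
  by_cases hu : ∃ m : ℤ, u = (m : ZMod N) * (d' : ZMod N)
  · by_cases hv : ∃ n : ℤ, v = (n : ZMod N) * ((N / (p * d') : ℕ) : ZMod N)
    · obtain ⟨m, hm⟩ := hu
      obtain ⟨n, hn⟩ := hv
      -- first factor memberships
      have hu1 : (u, v) ∈ Hxz N d' (N / d') ↔ ((n : ZMod p) = 0) := by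
        rw [mem_Hxz]
        constructor
        · rintro ⟨-, n', hn'⟩
          have : (n : ZMod N) * ((N / (p * d') : ℕ) : ZMod N)
              = (n' * p : ℤ) * ((N / (p * d') : ℕ) : ZMod N) := by
            rw [← hn, hn', hc2]; push_cast; ring
          have := key_inj p (N / (p * d')) hdvd2 hp2 this
          rw [this]; push_cast
          rw [ZMod.natCast_self, mul_zero]
        · intro h
          obtain ⟨k, hk⟩ := (ZMod.intCast_zmod_eq_zero_iff_dvd n p).mp h
          refine ⟨⟨m, hm⟩, ⟨k, ?_⟩⟩
          rw [hn, hk, hc2]; push_cast; ring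
      have hu3 : (u, v) ∈ Hxz N (p * d') (N / (p * d')) ↔ ((m : ZMod p) = 0) := by
        rw [mem_Hxz]
        constructor
        · rintro ⟨⟨m', hm'⟩, -⟩
          have : (m : ZMod N) * (d' : ZMod N) = (m' * p : ℤ) * (d' : ZMod N) := by
            rw [← hm, hm', hc1]; push_cast; ring
          have := key_inj p d' hd'N hpNd' this
          rw [this]; push_cast
          rw [ZMod.natCast_self, mul_zero]
        · intro h
          obtain ⟨k, hk⟩ := (ZMod.intCast_zmod_eq_zero_iff_dvd m p).mp h
          refine ⟨⟨k, ?_⟩, ⟨n, hn⟩⟩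
          rw [hm, hk, hc1]; push_cast; ring
      -- the six membership characterisations
      have L1 : ((u, v), (y, z)) ∈ (Hxz N d' (N / d')).prod (Hxz p 1 p)
          ↔ ((n : ZMod p) = 0 ∧ z = 0) := by
        rw [AddSubgroup.mem_prod, hu1, hyz1]
      have L2 : ((u, v), (y, z)) ∈ (Hxz N d' (N / d')).prod (Hxz p p 1)
          ↔ ((n : ZMod p) = 0 ∧ y = 0) := by
        rw [AddSubgroup.mem_prod, hu1, hyz2]
      have L3 : ((u, v), (y, z)) ∈ (Hxz N (p * d') (N / (p * d'))).prod (Hxz p 1 p)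
          ↔ ((m : ZMod p) = 0 ∧ z = 0) := by
        rw [AddSubgroup.mem_prod, hu3, hyz1]
      have L4 : ((u, v), (y, z)) ∈ (Hxz N (p * d') (N / (p * d'))).prod (Hxz p p 1)
          ↔ ((m : ZMod p) = 0 ∧ y = 0) := by
        rw [AddSubgroup.mem_prod, hu3, hyz2]
      have L5 : ∀ a : (ZMod p)ˣ, (((u, v), (y, z)) ∈ H5 N p d' a)
          ↔ (y = (m : ZMod p) * (a : ZMod p)
              ∧ z = (n : ZMod p) * (-((a⁻¹ : (ZMod p)ˣ) : ZMod p))) := by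
        intro a
        rw [mem_H5]
        constructor
        · rintro ⟨m', n', hEq⟩
          simp only [Prod.mk.injEq] at hEq
          obtain ⟨⟨e1, e2⟩, e3, e4⟩ := hEq
          have em : ((m' : ℤ) : ZMod p) = (m : ZMod p) :=
            key_inj p d' hd'N hpNd' (e1.symm.trans hm)
          have en : ((n' : ℤ) : ZMod p) = (n : ZMod p) :=
            key_inj p (N / (p * d')) hdvd2 hp2 (e2.symm.trans hn)
  
          exact ⟨by rw [e3, em], by rw [e4, en]⟩
        · rintro ⟨h5, h6⟩
          exact ⟨m, n, by simp only [Prod.mk.injEq]; exact ⟨⟨hm, hn⟩, h5, h6⟩⟩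
      have L6 : ∀ a : (ZMod p)ˣ, (((u, v), (y, z)) ∈ H6 N p d' a)
          ↔ (y = (n : ZMod p) * (a : ZMod p)
              ∧ z = (m : ZMod p) * (-((a⁻¹ : (ZMod p)ˣ) : ZMod p))) := by
        intro a
        rw [mem_H6]
        constructor
        · rintro ⟨m', n', hEq⟩
          simp only [Prod.mk.injEq] at hEq
          obtain ⟨⟨e1, e2⟩, e3, e4⟩ := hEq
          have em : ((m' : ℤ) : ZMod p) = (m : ZMod p) :=
            key_inj p d' hd'N hpNd' (e1.symm.trans hm)
          have en : ((n' : ℤ) : ZMod p) = (n : ZMod p) :=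
            key_inj p (N / (p * d')) hdvd2 hp2 (e2.symm.trans hn)
          exact ⟨by rw [e3, en], by rw [e4, em]⟩
        · rintro ⟨h5, h6⟩
          exact ⟨m, n, by simp only [Prod.mk.injEq]; exact ⟨⟨hm, hn⟩, h5, h6⟩⟩
      rw [vH_eq_ite _ _ _ L1, vH_eq_ite _ _ _ L2, vH_eq_ite _ _ _ L3, vH_eq_ite _ _ _ L4]
      have hsum : ∀ a : (ZMod p)ˣ,
          (-vH ((H5 N p d' a : AddSubgroup (DD N p)) : Set (DD N p)) ((u, v), (y, z))
            + vH ((H6 N p d' a : AddSubgroup (DD N p)) : Set (DD N p)) ((u, v), (y, z)))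
          = (-(if y = (m : ZMod p) * (a : ZMod p)
                ∧ z = (n : ZMod p) * (-((a⁻¹ : (ZMod p)ˣ) : ZMod p)) then (1:ℂ) else 0)
            + (if y = (n : ZMod p) * (a : ZMod p)
                ∧ z = (m : ZMod p) * (-((a⁻¹ : (ZMod p)ˣ) : ZMod p)) then 1 else 0)) := by
        intro a
        rw [vH_eq_ite _ _ _ (L5 a), vH_eq_ite _ _ _ (L6 a)]
      rw [Finset.sum_congr rfl (fun a _ => hsum a)]
      exact count_lemma p ((m : ZMod p)) ((n : ZMod p)) y z
    · -- v not a multiple of N/(pd'): everything vanishes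
      have Z : ∀ S : Set (DD N p), ((u, v), (y, z)) ∉ S → vH S ((u, v), (y, z)) = 0 :=
        fun S h => Set.indicator_of_notMem h 1
      have n1 : ∀ z' : AddSubgroup (ZMod p × ZMod p),
          ((u, v), (y, z)) ∉ ((Hxz N d' (N / d')).prod z' : Set (DD N p)) := by
        intro z' hmem
        rw [SetLike.mem_coe, AddSubgroup.mem_prod, mem_Hxz] at hmem
        obtain ⟨⟨-, n', hn'⟩, -⟩ := hmem
        exact hv ⟨n' * p, by rw [hn', hc2]; push_cast; ring⟩
      have n2 : ∀ z' : AddSubgroup (ZMod p × ZMod p),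
          ((u, v), (y, z)) ∉ ((Hxz N (p * d') (N / (p * d'))).prod z' : Set (DD N p)) := by
        intro z' hmem
        rw [SetLike.mem_coe, AddSubgroup.mem_prod, mem_Hxz] at hmem
        obtain ⟨⟨-, n', hn'⟩, -⟩ := hmem
        exact hv ⟨n', hn'⟩
      have n5 : ∀ a : (ZMod p)ˣ, ((u, v), (y, z)) ∉ ((H5 N p d' a : AddSubgroup (DD N p)) : Set (DD N p)) := by
        intro a hmem
        rw [SetLike.mem_coe, mem_H5] at hmem
        obtain ⟨m', n', hEq⟩ := hmem
        simp only [Prod.mk.injEq] at hEq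
        exact hv ⟨n', hEq.1.2⟩
      have n6 : ∀ a : (ZMod p)ˣ, ((u, v), (y, z)) ∉ ((H6 N p d' a : AddSubgroup (DD N p)) : Set (DD N p)) := by
        intro a hmem
        rw [SetLike.mem_coe, mem_H6] at hmem
        obtain ⟨m', n', hEq⟩ := hmem
        simp only [Prod.mk.injEq] at hEq
        exact hv ⟨n', hEq.1.2⟩
      rw [Z _ (n1 _), Z _ (n1 _), Z _ (n2 _), Z _ (n2 _)]
      rw [Finset.sum_congr rfl (fun a _ => by rw [Z _ (n5 a), Z _ (n6 a)])]
      simp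
  · -- u not a multiple of d': everything vanishes
    have Z : ∀ S : Set (DD N p), ((u, v), (y, z)) ∉ S → vH S ((u, v), (y, z)) = 0 :=
      fun S h => Set.indicator_of_notMem h 1
    have n1 : ∀ z' : AddSubgroup (ZMod p × ZMod p),
        ((u, v), (y, z)) ∉ ((Hxz N d' (N / d')).prod z' : Set (DD N p)) := by
      intro z' hmem
      rw [SetLike.mem_coe, AddSubgroup.mem_prod, mem_Hxz] at hmem
      obtain ⟨⟨⟨m', hm'⟩, -⟩, -⟩ := hmem
      exact hu ⟨m', hm'⟩
    have n2 : ∀ z' : AddSubgroup (ZMod p × ZMod p),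
        ((u, v), (y, z)) ∉ ((Hxz N (p * d') (N / (p * d'))).prod z' : Set (DD N p)) := by
      intro z' hmem
      rw [SetLike.mem_coe, AddSubgroup.mem_prod, mem_Hxz] at hmem
      obtain ⟨⟨⟨m', hm'⟩, -⟩, -⟩ := hmem
      exact hu ⟨m' * p, by rw [hm', hc1]; push_cast; ring⟩
    have n5 : ∀ a : (ZMod p)ˣ, ((u, v), (y, z)) ∉ ((H5 N p d' a : AddSubgroup (DD N p)) : Set (DD N p)) := by
      intro a hmem
      rw [SetLike.mem_coe, mem_H5] at hmem
      obtain ⟨m', n', hEq⟩ := hmem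
      simp only [Prod.mk.injEq] at hEq
      exact hu ⟨m', hEq.1.1⟩
    have n6 : ∀ a : (ZMod p)ˣ, ((u, v), (y, z)) ∉ ((H6 N p d' a : AddSubgroup (DD N p)) : Set (DD N p)) := by
      intro a hmem
      rw [SetLike.mem_coe, mem_H6] at hmem
      obtain ⟨m', n', hEq⟩ := hmem
      simp only [Prod.mk.injEq] at hEq
      exact hu ⟨m', hEq.1.1⟩
    rw [Z _ (n1 _), Z _ (n1 _), Z _ (n2 _), Z _ (n2 _)]
    rw [Finset.sum_congr rfl (fun a _ => by rw [Z _ (n5 a), Z _ (n6 a)])]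
    simp
end
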